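/- For any finite bipartite graph G of order n > 0, one has δ_loc(G) < n/4 + log₂(n). -/

import Mathlib

open Finset

open Classical in
/-- The odd-neighbourhood of `D` in `G`: vertices having an odd number of neighbours in `D`. -/
noncomputable def oddNbhd {V : Type*} [Fintype V] (G : SimpleGraph V) (D : Finset V) :
    Finset V :=
  Finset.univ.filter fun v => Odd ((D.filter fun u => G.Adj v u).card)

section Aux

variable {V : Type*} [Fintype V] [DecidableEq V]

open Classical

lemma mem_oddNbhd (G : SimpleGraph V) (D : Finset V) (v : V) :
    v ∈ oddNbhd G D ↔ Odd ((D.filter fun u => G.Adj v u).card) := by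
  simp [oddNbhd]

lemma odd_symmDiff_singleton (B : Finset V) (x : V) :
    Odd ((symmDiff B ({x} : Finset V)).card) ↔ ¬ Odd B.card := by
  by_cases hx : x ∈ B
  · have h1 : symmDiff B ({x} : Finset V) = B.erase x := by
      ext y
      simp only [Finset.mem_symmDiff, Finset.mem_singleton, Finset.mem_erase]
      constructor
      · rintro (⟨hy, hne⟩ | ⟨rfl, hy⟩)
        · exact ⟨hne, hy⟩
        · exact absurd hx hy
      · rintro ⟨hne, hy⟩
        exact Or.inl ⟨hy, hne⟩
    have hpos : 1 ≤ B.card := Finset.card_pos.2 ⟨x, hx⟩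
    rw [h1, Finset.card_erase_of_mem hx]
    simp only [Nat.odd_iff]
    omega
  · have h1 : symmDiff B ({x} : Finset V) = insert x B := by
      ext y
      simp only [Finset.mem_symmDiff, Finset.mem_singleton, Finset.mem_insert]
      constructor
      · rintro (⟨hy, _⟩ | ⟨rfl, _⟩)
        · exact Or.inr hy
        · exact Or.inl rfl
      · rintro (rfl | hy)
        · exact Or.inr ⟨rfl, hx⟩
        · exact Or.inl ⟨hy, fun h => hx (h ▸ hy)⟩
    rw [h1, Finset.card_insert_of_notMem hx]
    simp only [Nat.odd_iff]
    omega

lemma card_odd_inter_le (S T : Finset V) :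
    (S.powerset.filter fun D => Odd ((T ∩ D).card)).card ≤ 2 ^ (S.card - 1) := by
  rcases (T ∩ S).eq_empty_or_nonempty with h | h
  · have hempty : (S.powerset.filter fun D => Odd ((T ∩ D).card)) = ∅ := by
      rw [Finset.filter_eq_empty_iff]
      intro D hD
      have hsub : T ∩ D ⊆ T ∩ S :=
        Finset.inter_subset_inter (Finset.Subset.refl T) (Finset.mem_powerset.1 hD)
      rw [h] at hsub
      have : T ∩ D = ∅ := Finset.subset_empty.1 hsub
      simp [this]
    simp [hempty]
  · obtain ⟨x, hx⟩ := h
    have hxT : x ∈ T := (Finset.mem_inter.1 hx).1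
    have hxS : x ∈ S := (Finset.mem_inter.1 hx).2
    have hS1 : 1 ≤ S.card := Finset.card_pos.2 ⟨x, hxS⟩
    -- parity-flipping injection
    have hflip : ∀ D ∈ S.powerset,
        (T ∩ symmDiff D ({x} : Finset V)) = symmDiff (T ∩ D) ({x} : Finset V) := by
      intro D _
      ext y
      simp only [Finset.mem_inter, Finset.mem_symmDiff, Finset.mem_singleton]
      by_cases hy : y = x
      · subst hy; tauto
      · tauto
    have hinj : (S.powerset.filter fun D => Odd ((T ∩ D).card)).card
        ≤ (S.powerset.filter fun D => ¬ Odd ((T ∩ D).card)).card := by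
      apply Finset.card_le_card_of_injOn (fun D => symmDiff D ({x} : Finset V))
      · intro D hD
        simp only [Finset.mem_coe, Finset.mem_filter, Finset.mem_powerset] at hD ⊢
        obtain ⟨hDS, hodd⟩ := hD
        constructor
        · refine le_trans (symmDiff_le_sup (a := D) (b := ({x} : Finset V))) ?_
          exact Finset.union_subset hDS (Finset.singleton_subset_iff.2 hxS)
        · rw [hflip D (Finset.mem_powerset.2 hDS), odd_symmDiff_singleton]
          simpa using hodd
      · intro a ha b hb hab
        have := congrArg (fun s => symmDiff s ({x} : Finset V)) hab
        simpa [symmDiff_symmDiff_cancel_right] using this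
    have hsum : (S.powerset.filter fun D => Odd ((T ∩ D).card)).card
        + (S.powerset.filter fun D => ¬ Odd ((T ∩ D).card)).card = 2 ^ S.card := by
      rw [Finset.card_filter_add_card_filter_not, Finset.card_powerset]
    have hpow : 2 ^ S.card = 2 * 2 ^ (S.card - 1) := by
      rw [← pow_succ']
      congr 1
      omega
    omega

open Classical in
lemma key_exists (G : SimpleGraph V) (A B : Finset V)
    (hdisj : Disjoint A B)
    (hbip : ∀ u v : V, G.Adj u v → (u ∈ A ∧ v ∈ B) ∨ (u ∈ B ∧ v ∈ A))
    (S : Finset V) (hSA : S ⊆ A) (hS : S.Nonempty) :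
    ∃ D : Finset V, D.Nonempty ∧
      (2 ^ S.card - 1) * (D ∪ oddNbhd G D).card ≤ (S.card + B.card) * 2 ^ (S.card - 1) := by
  classical
  -- no neighbours of an `A`-vertex lie in `D ⊆ S ⊆ A`
  have hAempty : ∀ (v : V), v ∉ B → ∀ D ∈ S.powerset,
      (D.filter fun u => G.Adj v u) = ∅ := by
    intro v hv D hD
    rw [Finset.filter_eq_empty_iff]
    intro u hu hadj
    have huA : u ∈ A := hSA ((Finset.mem_powerset.1 hD) hu)
    rcases hbip v u hadj with ⟨_, huB⟩ | ⟨hvB, _⟩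
    · exact (Finset.disjoint_left.1 hdisj huA) huB
    · exact hv hvB
  have hzero : ∀ v : V, v ∉ S ∪ B →
      (S.powerset.filter fun D => v ∈ D ∪ oddNbhd G D).card = 0 := by
    intro v hv
    rw [Finset.card_eq_zero, Finset.filter_eq_empty_iff]
    intro D hD
    have hvS : v ∉ S := fun h => hv (Finset.mem_union_left _ h)
    have hvB : v ∉ B := fun h => hv (Finset.mem_union_right _ h)
    rw [Finset.mem_union]
    rintro (hmem | hmem)
    · exact hvS ((Finset.mem_powerset.1 hD) hmem)
    · rw [mem_oddNbhd, hAempty v hvB D hD] at hmem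
      simp at hmem
  have hbound : ∀ v ∈ S ∪ B,
      (S.powerset.filter fun D => v ∈ D ∪ oddNbhd G D).card ≤ 2 ^ (S.card - 1) := by
    intro v hv
    rcases Finset.mem_union.1 hv with hvS | hvB
    · have hvB : v ∉ B := Finset.disjoint_left.1 hdisj (hSA hvS)
      have hiff : ∀ D ∈ S.powerset,
          (v ∈ D ∪ oddNbhd G D) ↔ Odd ((({v} : Finset V) ∩ D).card) := by
        intro D hD
        rw [Finset.mem_union, mem_oddNbhd, hAempty v hvB D hD]
        simp only [Finset.card_empty]
        constructor
        · rintro (hmem | hodd)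
          · rw [Finset.singleton_inter_of_mem hmem]
            simp
          · simp at hodd
        · intro hodd
          by_cases hmem : v ∈ D
          · exact Or.inl hmem
          · rw [Finset.singleton_inter_of_notMem hmem] at hodd
            simp at hodd
      rw [Finset.filter_congr hiff]
      exact card_odd_inter_le S _
    · have hiff : ∀ D ∈ S.powerset,
          (v ∈ D ∪ oddNbhd G D) ↔
            Odd (((Finset.univ.filter fun u => G.Adj v u) ∩ D).card) := by
        intro D hD
        have hvD : v ∉ D := fun h =>
          Finset.disjoint_left.1 hdisj (hSA ((Finset.mem_powerset.1 hD) h)) hvB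
        have hTD : (Finset.univ.filter fun u => G.Adj v u) ∩ D
            = D.filter fun u => G.Adj v u := by
          ext u
          simp only [Finset.mem_inter, Finset.mem_filter, Finset.mem_univ, true_and]
          tauto
        rw [Finset.mem_union, mem_oddNbhd, hTD]
        simp [hvD]
      rw [Finset.filter_congr hiff]
      exact card_odd_inter_le S _
  -- double counting
  have hA : ∑ D ∈ S.powerset, (D ∪ oddNbhd G D).card
      = ∑ v : V, (S.powerset.filter fun D => v ∈ D ∪ oddNbhd G D).card := by
    have h1 : ∀ D : Finset V,
        (D ∪ oddNbhd G D).card = ∑ v : V, if v ∈ D ∪ oddNbhd G D then 1 else 0 := by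
      intro D
      rw [Finset.sum_ite_mem, Finset.univ_inter, Finset.card_eq_sum_ones]
    simp_rw [h1]
    rw [Finset.sum_comm]
    refine Finset.sum_congr rfl fun v _ => ?_
    rw [Finset.card_filter]
  have htot : ∑ D ∈ S.powerset, (D ∪ oddNbhd G D).card
      ≤ (S.card + B.card) * 2 ^ (S.card - 1) := by
    rw [hA]
    have hsub : ∑ v ∈ S ∪ B, (S.powerset.filter fun D => v ∈ D ∪ oddNbhd G D).card
        = ∑ v : V, (S.powerset.filter fun D => v ∈ D ∪ oddNbhd G D).card :=
      Finset.sum_subset (Finset.subset_univ _) (fun v _ hv => hzero v hv)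
    rw [← hsub]
    calc ∑ v ∈ S ∪ B, (S.powerset.filter fun D => v ∈ D ∪ oddNbhd G D).card
        ≤ (S ∪ B).card * 2 ^ (S.card - 1) := by
          have := Finset.sum_le_card_nsmul (S ∪ B)
            (fun v => (S.powerset.filter fun D => v ∈ D ∪ oddNbhd G D).card)
            (2 ^ (S.card - 1)) hbound
          simpa [smul_eq_mul] using this
      _ ≤ (S.card + B.card) * 2 ^ (S.card - 1) :=
          Nat.mul_le_mul_right _ (Finset.card_union_le S B)
  -- pigeonhole: minimum over nonempty subsets
  obtain ⟨x, hxS⟩ := hS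
  have hsne : (S.powerset.erase ∅).Nonempty := by
    refine ⟨{x}, Finset.mem_erase.2 ⟨by simp, Finset.mem_powerset.2 ?_⟩⟩
    exact Finset.singleton_subset_iff.2 hxS
  obtain ⟨D0, hD0mem, hD0min⟩ :=
    Finset.exists_min_image (S.powerset.erase ∅) (fun D => (D ∪ oddNbhd G D).card) hsne
  refine ⟨D0, Finset.nonempty_iff_ne_empty.2 (Finset.ne_of_mem_erase hD0mem), ?_⟩
  have hcard : (S.powerset.erase ∅).card = 2 ^ S.card - 1 := by
    rw [Finset.card_erase_of_mem (by simp), Finset.card_powerset]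
  calc (2 ^ S.card - 1) * (D0 ∪ oddNbhd G D0).card
      = ∑ _D ∈ S.powerset.erase ∅, (D0 ∪ oddNbhd G D0).card := by
        rw [Finset.sum_const, smul_eq_mul, hcard]
    _ ≤ ∑ D ∈ S.powerset.erase ∅, (D ∪ oddNbhd G D).card :=
        Finset.sum_le_sum (fun D hD => hD0min D hD)
    _ ≤ ∑ D ∈ S.powerset, (D ∪ oddNbhd G D).card :=
        Finset.sum_le_sum_of_subset (Finset.erase_subset _ _)
    _ ≤ (S.card + B.card) * 2 ^ (S.card - 1) := htot

lemma two_mul_le_two_pow : ∀ m : ℕ, 1 ≤ m → 2 * m ≤ 2 ^ m := by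
  intro m
  induction m with
  | zero => omega
  | succ k ih =>
    intro _
    by_cases hk : 1 ≤ k
    · have h1 := ih hk
      have h2 : 2 ≤ 2 ^ k := by
        calc 2 = 2 ^ 1 := rfl
        _ ≤ 2 ^ k := Nat.pow_le_pow_right (by norm_num) hk
      rw [pow_succ]
      omega
    · interval_cases k
      norm_num

end Aux

/-- For any finite bipartite graph `G` of order `n > 0`, `δ_loc(G) < n/4 + log₂ n`, where
`δ_loc(G) + 1 = min_{∅ ≠ D ⊆ V} |D ∪ Odd_G(D)|`. -/
theorem dloc_lt_quarter_bipartite {V : Type*} [Fintype V] [DecidableEq V]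
    (G : SimpleGraph V)
    (V1 V2 : Finset V) (hdisj : Disjoint V1 V2) (hcover : V1 ∪ V2 = Finset.univ)
    (hbip : ∀ u v : V, G.Adj u v → (u ∈ V1 ∧ v ∈ V2) ∨ (u ∈ V2 ∧ v ∈ V1))
    (hn : 0 < Fintype.card V) (dloc : ℕ)
    (hd : dloc + 1 = sInf {m : ℕ | ∃ D : Finset V, D.Nonempty ∧ (D ∪ oddNbhd G D).card = m}) :
    (dloc : ℝ) < (Fintype.card V : ℝ) / 4 + Real.logb 2 (Fintype.card V : ℝ) := by
  classical
  set n := Fintype.card V with hn_def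
  have hVcard : V1.card + V2.card = n := by
    rw [← Finset.card_union_of_disjoint hdisj, hcover, Finset.card_univ]
  by_cases hn2 : n ≤ 2
  · -- trivial case n ≤ 2
    have huniv : (Finset.univ : Finset V).Nonempty := Finset.univ_nonempty_iff.2
      (Fintype.card_pos_iff.1 hn)
    have hmem : ((Finset.univ : Finset V) ∪ oddNbhd G Finset.univ).card ∈
        {m : ℕ | ∃ D : Finset V, D.Nonempty ∧ (D ∪ oddNbhd G D).card = m} :=
      ⟨Finset.univ, huniv, rfl⟩
    have hle : dloc + 1 ≤ n := by
      rw [hd]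
      refine le_trans (Nat.sInf_le hmem) ?_
      rw [hn_def, ← Finset.card_univ]
      exact Finset.card_le_univ _
    interval_cases n
    · have hdl : dloc = 0 := by omega
      rw [hdl]
      norm_num [Real.logb_one]
    · have hdl : dloc ≤ 1 := by omega
      have hlog : Real.logb 2 (2 : ℝ) = 1 := Real.logb_self_eq_one one_lt_two
      push_cast
      rw [hlog]
      interval_cases dloc <;> norm_num
  · have hn3 : 3 ≤ n := by omega
    -- choose the larger side
    obtain ⟨A, B, hdisjAB, hbipAB, hBA, hsumAB⟩ :
        ∃ A B : Finset V, Disjoint A B ∧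
          (∀ u v : V, G.Adj u v → (u ∈ A ∧ v ∈ B) ∨ (u ∈ B ∧ v ∈ A)) ∧
          B.card ≤ A.card ∧ A.card + B.card = n := by
      rcases le_total V2.card V1.card with h | h
      · exact ⟨V1, V2, hdisj, hbip, h, hVcard⟩
      · exact ⟨V2, V1, hdisj.symm, fun u v hadj => (hbip u v hadj).symm, h, by omega⟩
    set j := Nat.clog 2 n with hj_def
    have hj2 : 2 ≤ j := by
      by_contra hcon
      have : j ≤ 1 := by omega
      have := (Nat.clog_le_iff_le_pow (by norm_num : 1 < 2)).1 this
      omega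
    have hnle : n ≤ 2 ^ j := Nat.le_pow_clog (by norm_num) n
    have hlt : 2 ^ (j - 1) < n := by
      have := Nat.pow_pred_clog_lt_self (b := 2) (by norm_num) (x := n) (by omega)
      simpa [Nat.pred_eq_sub_one] using this
    have hA1 : 2 ≤ A.card := by omega
    have hjA : j ≤ A.card := by
      rw [hj_def]
      rw [Nat.clog_le_iff_le_pow (by norm_num : 1 < 2)]
      calc n ≤ 2 * A.card := by omega
        _ ≤ 2 ^ A.card := two_mul_le_two_pow A.card (by omega)
    obtain ⟨S, hSA, hScard⟩ := Finset.exists_subset_card_eq hjA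
    have hSne : S.Nonempty := by
      rw [← Finset.card_pos, hScard]; omega
    obtain ⟨D, hDne, hkey⟩ := key_exists G A B hdisjAB hbipAB S hSA hSne
    rw [hScard] at hkey
    set c := (D ∪ oddNbhd G D).card with hc_def
    have hdc : dloc + 1 ≤ c := by
      rw [hd]
      exact Nat.sInf_le ⟨D, hDne, rfl⟩
    -- Natural number arithmetic: 4 * (dloc + 1) ≤ n + 4 * j
    have h4 : 4 * (dloc + 1) ≤ n + 4 * j := by
      set Q := 2 ^ j with hQ_def
      have hQ4 : 4 ≤ Q := by
        calc (4 : ℕ) = 2 ^ 2 := rfl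
          _ ≤ 2 ^ j := Nat.pow_le_pow_right (by norm_num) hj2
      have hQH : Q = 2 * 2 ^ (j - 1) := by
        rw [hQ_def, ← pow_succ']
        congr 1
        omega
      have hb : 2 * B.card ≤ n := by omega
      have hkey2 : (Q - 1) * (dloc + 1) ≤ (j + B.card) * 2 ^ (j - 1) :=
        le_trans (Nat.mul_le_mul_left _ hdc) hkey
      -- main inequality : 2 * (j + b) * Q ≤ (Q - 1) * (n + 4 * j)
      have hQjQ : Q ≤ j * Q := Nat.le_mul_of_pos_left Q (by omega)
      have hjQ4 : j * 4 ≤ j * Q := Nat.mul_le_mul_left j hQ4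
      have hJ : n + 4 * j ≤ 2 * (j * Q) := by omega
      have hBq : 2 * (B.card * Q) ≤ n * Q := by
        have h := Nat.mul_le_mul_right Q hb
        rwa [mul_assoc] at h
      have hmain : 2 * (j + B.card) * Q ≤ (Q - 1) * (n + 4 * j) := by
        have e1 : 2 * (j + B.card) * Q = 2 * (j * Q) + 2 * (B.card * Q) := by ring
        have e2 : Q * (n + 4 * j) = n * Q + 4 * (j * Q) := by ring
        rw [e1, Nat.sub_one_mul, e2]
        omega
      have hc4 : (Q - 1) * (4 * (dloc + 1)) ≤ (Q - 1) * (n + 4 * j) := by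
        calc (Q - 1) * (4 * (dloc + 1)) = 4 * ((Q - 1) * (dloc + 1)) := by ring
          _ ≤ 4 * ((j + B.card) * 2 ^ (j - 1)) := Nat.mul_le_mul_left _ hkey2
          _ = 2 * (j + B.card) * (2 * 2 ^ (j - 1)) := by ring
          _ = 2 * (j + B.card) * Q := by rw [← hQH]
          _ ≤ (Q - 1) * (n + 4 * j) := hmain
      exact Nat.le_of_mul_le_mul_left hc4 (by omega)
    -- real arithmetic
    have hjlog : ((j : ℝ) - 1) < Real.logb 2 (n : ℝ) := by
      have hcast : ((2 : ℝ)) ^ (j - 1) < (n : ℝ) := by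
        exact_mod_cast hlt
      have hpos : (0 : ℝ) < (2 : ℝ) ^ (j - 1) := by positivity
      have hlog1 : Real.logb 2 ((2 : ℝ) ^ (j - 1)) = ((j - 1 : ℕ) : ℝ) := by
        rw [Real.logb_pow, Real.logb_self_eq_one one_lt_two, mul_one]
      have hmono : Real.logb 2 ((2 : ℝ) ^ (j - 1)) < Real.logb 2 (n : ℝ) :=
        Real.logb_lt_logb one_lt_two hpos hcast
      rw [hlog1] at hmono
      have : ((j - 1 : ℕ) : ℝ) = (j : ℝ) - 1 := by
        have : 1 ≤ j := by omega
        push_cast [Nat.cast_sub this]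
        ring
      linarith [hmono, this.symm.le]
    have h4R : (4 : ℝ) * ((dloc : ℝ) + 1) ≤ (n : ℝ) + 4 * (j : ℝ) := by
      exact_mod_cast h4
    linarith
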